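/- Let r₁, r₂, r₃, k₁, k₂, k₃, m₁₂, m₃₂ > 0 with r₂ > m₁₂ + m₃₂. Define P₂* = (k₂/r₂)(r₂ − m₁₂ − m₃₂), P₁* = (k₁/(2r₁))[r₁ + sqrt(r₁² + (4/k₁)r₁m₁₂P₂*)], P₃* = (k₃/(2r₃))[r₃ + sqrt(r₃² + (4/k₃)r₃m₃₂P₂*)]. Then (P₁*, P₂*, P₃*) is a strictly positive equilibrium of the system P₁' = r₁P₁(1 − P₁/k₁) + m₁₂P₂, P₂' = r₂P₂(1 − P₂/k₂) − (m₁₂ + m₃₂)P₂, P₃' = r₃P₃(1 − P₃/k₃) + m₃₂P₂, and the three eigenvalues of the Jacobian there, namely −(r₁/k₁)P₁* − (m₁₂/P₁*)P₂*, −(r₂/k₂)P₂*, and −(r₃/k₃)P₃* − (m₃₂/P₃*)P₂*, are all strictly negative. -/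

import Mathlib

open Matrix in
set_option maxHeartbeats 2000000 in
/-- Model (n3) (`P₁ ← P₂ → P₃`): under `r₂ > m₁₂ + m₃₂` the explicit triple is
a strictly positive equilibrium and the three eigenvalues of the Jacobian
there are all strictly negative. -/
theorem modeln3_coexistence_feasible_and_stable
    (r₁ r₂ r₃ k₁ k₂ k₃ m₁₂ m₃₂ : ℝ)
    (hr₁ : 0 < r₁) (hr₂ : 0 < r₂) (hr₃ : 0 < r₃)
    (hk₁ : 0 < k₁) (hk₂ : 0 < k₂) (hk₃ : 0 < k₃)
    (hm₁₂ : 0 < m₁₂) (hm₃₂ : 0 < m₃₂)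
    (hfeas : m₁₂ + m₃₂ < r₂)
    (P₁ P₂ P₃ : ℝ)
    (hP₂ : P₂ = (k₂ / r₂) * (r₂ - m₁₂ - m₃₂))
    (hP₁ : P₁ = (k₁ / (2 * r₁)) *
      (r₁ + Real.sqrt (r₁ ^ 2 + (4 / k₁) * r₁ * m₁₂ * P₂)))
    (hP₃ : P₃ = (k₃ / (2 * r₃)) *
      (r₃ + Real.sqrt (r₃ ^ 2 + (4 / k₃) * r₃ * m₃₂ * P₂)))
    (J : Matrix (Fin 3) (Fin 3) ℝ)
    (hJ : J = !![r₁ - 2 * r₁ * P₁ / k₁, m₁₂, 0;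
                 0, r₂ - 2 * r₂ * P₂ / k₂ - (m₁₂ + m₃₂), 0;
                 0, m₃₂, r₃ - 2 * r₃ * P₃ / k₃]) :
    0 < P₁ ∧ 0 < P₂ ∧ 0 < P₃ ∧
    r₁ * P₁ * (1 - P₁ / k₁) + m₁₂ * P₂ = 0 ∧
    r₂ * P₂ * (1 - P₂ / k₂) - (m₁₂ + m₃₂) * P₂ = 0 ∧
    r₃ * P₃ * (1 - P₃ / k₃) + m₃₂ * P₂ = 0 ∧
    J 0 0 = -(r₁ / k₁) * P₁ - (m₁₂ / P₁) * P₂ ∧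
    J 1 1 = -(r₂ / k₂) * P₂ ∧
    J 2 2 = -(r₃ / k₃) * P₃ - (m₃₂ / P₃) * P₂ ∧
    J 0 0 < 0 ∧ J 1 1 < 0 ∧ J 2 2 < 0 ∧
    (∀ μ ∈ spectrum ℂ (J.map (Complex.ofReal)), μ.re < 0) := by

  have hP₂pos : 0 < P₂ := by
    rw [hP₂]
    have : 0 < r₂ - m₁₂ - m₃₂ := by linarith
    positivity
  have hD₁ : (0:ℝ) ≤ r₁ ^ 2 + (4 / k₁) * r₁ * m₁₂ * P₂ := by positivity
  have hD₃ : (0:ℝ) ≤ r₃ ^ 2 + (4 / k₃) * r₃ * m₃₂ * P₂ := by positivity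
  set S₁ := Real.sqrt (r₁ ^ 2 + (4 / k₁) * r₁ * m₁₂ * P₂) with hS₁def
  set S₃ := Real.sqrt (r₃ ^ 2 + (4 / k₃) * r₃ * m₃₂ * P₂) with hS₃def
  have hS₁sq : S₁ ^ 2 = r₁ ^ 2 + (4 / k₁) * r₁ * m₁₂ * P₂ := Real.sq_sqrt hD₁
  have hS₃sq : S₃ ^ 2 = r₃ ^ 2 + (4 / k₃) * r₃ * m₃₂ * P₂ := Real.sq_sqrt hD₃
  have hS₁pos : 0 < S₁ := Real.sqrt_pos.2 (by positivity)
  have hS₃pos : 0 < S₃ := Real.sqrt_pos.2 (by positivity)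
  have hS₁gt : r₁ < S₁ := by
    nlinarith [hS₁sq, mul_pos (mul_pos (div_pos (by norm_num : (0:ℝ)<4) hk₁) hr₁) (mul_pos hm₁₂ hP₂pos)]
  have hS₃gt : r₃ < S₃ := by
    nlinarith [hS₃sq, mul_pos (mul_pos (div_pos (by norm_num : (0:ℝ)<4) hk₃) hr₃) (mul_pos hm₃₂ hP₂pos)]
  have hP₁pos : 0 < P₁ := by
    rw [hP₁]
    have : 0 < r₁ + S₁ := by linarith
    positivity
  have hP₃pos : 0 < P₃ := by
    rw [hP₃]
    have : 0 < r₃ + S₃ := by linarith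
    positivity
  have hS₁sq' : S₁ ^ 2 * k₁ = r₁ ^ 2 * k₁ + 4 * r₁ * m₁₂ * P₂ := by
    rw [hS₁sq]; field_simp
  have hS₃sq' : S₃ ^ 2 * k₃ = r₃ ^ 2 * k₃ + 4 * r₃ * m₃₂ * P₂ := by
    rw [hS₃sq]; field_simp
  have heq₁ : r₁ * P₁ * (1 - P₁ / k₁) + m₁₂ * P₂ = 0 := by
    rw [hP₁]
    field_simp
    linear_combination (-1) * hS₁sq'
  have heq₂ : r₂ * P₂ * (1 - P₂ / k₂) - (m₁₂ + m₃₂) * P₂ = 0 := by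
    rw [hP₂]; field_simp; ring
  have heq₃ : r₃ * P₃ * (1 - P₃ / k₃) + m₃₂ * P₂ = 0 := by
    rw [hP₃]
    field_simp
    linear_combination (-1) * hS₃sq'
  have hJ00 : J 0 0 = -(r₁ / k₁) * P₁ - (m₁₂ / P₁) * P₂ := by
    rw [hJ]
    show r₁ - 2 * r₁ * P₁ / k₁ = -(r₁ / k₁) * P₁ - (m₁₂ / P₁) * P₂
    have h := heq₁
    field_simp [hk₁.ne'] at h
    field_simp [hP₁pos.ne', hk₁.ne']
    linear_combination h
  have hJ11 : J 1 1 = -(r₂ / k₂) * P₂ := by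
    rw [hJ]
    show r₂ - 2 * r₂ * P₂ / k₂ - (m₁₂ + m₃₂) = -(r₂ / k₂) * P₂
    rw [hP₂]; field_simp; ring
  have hJ22 : J 2 2 = -(r₃ / k₃) * P₃ - (m₃₂ / P₃) * P₂ := by
    rw [hJ]
    show r₃ - 2 * r₃ * P₃ / k₃ = -(r₃ / k₃) * P₃ - (m₃₂ / P₃) * P₂
    have h := heq₃
    field_simp [hk₃.ne'] at h
    field_simp [hP₃pos.ne', hk₃.ne']
    linear_combination h
  have hJ00neg : J 0 0 < 0 := by
    rw [hJ00]
    have h1 : 0 < (r₁ / k₁) * P₁ := by positivity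
    have h2 : 0 < (m₁₂ / P₁) * P₂ := by positivity
    linarith
  have hJ11neg : J 1 1 < 0 := by
    rw [hJ11]
    have : 0 < (r₂ / k₂) * P₂ := by positivity
    linarith
  have hJ22neg : J 2 2 < 0 := by
    rw [hJ22]
    have h1 : 0 < (r₃ / k₃) * P₃ := by positivity
    have h2 : 0 < (m₃₂ / P₃) * P₂ := by positivity
    linarith
  refine ⟨hP₁pos, hP₂pos, hP₃pos, heq₁, heq₂, heq₃, hJ00, hJ11, hJ22, hJ00neg, hJ11neg, hJ22neg, ?_⟩
  intro μ hμ
  rw [spectrum.mem_iff] at hμ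
  have hdet : ((algebraMap ℂ (Matrix (Fin 3) (Fin 3) ℂ)) μ - J.map Complex.ofReal).det = 0 := by
    by_contra h
    exact hμ ((Matrix.isUnit_iff_isUnit_det _).2 (isUnit_iff_ne_zero.2 h))
  set a : ℝ := r₁ - 2 * r₁ * P₁ / k₁ with ha
  set b : ℝ := r₂ - 2 * r₂ * P₂ / k₂ - (m₁₂ + m₃₂) with hb
  set c : ℝ := r₃ - 2 * r₃ * P₃ / k₃ with hc
  have hM : (algebraMap ℂ (Matrix (Fin 3) (Fin 3) ℂ)) μ - J.map Complex.ofReal =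
      !![μ - (a:ℂ), -(m₁₂:ℂ), 0; 0, μ - (b:ℂ), 0; 0, -(m₃₂:ℂ), μ - (c:ℂ)] := by
    rw [hJ]
    ext i j
    fin_cases i <;> fin_cases j <;>
      simp [Matrix.algebraMap_matrix_apply, Matrix.vecHead, Matrix.vecTail]
  have habc : μ = (a:ℂ) ∨ μ = (b:ℂ) ∨ μ = (c:ℂ) := by
    rw [hM, Matrix.det_fin_three] at hdet
    simp at hdet
    rcases hdet with (h | h) | h
    · exact Or.inl (sub_eq_zero.1 h)
    · exact Or.inr (Or.inl (sub_eq_zero.1 h))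
    · exact Or.inr (Or.inr (sub_eq_zero.1 h))
  have haJ : a = J 0 0 := by rw [hJ]; rfl
  have hbJ : b = J 1 1 := by rw [hJ]; rfl
  have hcJ : c = J 2 2 := by rw [hJ]; rfl
  rcases habc with h | h | h <;> rw [h, Complex.ofReal_re]
  · rw [haJ]; exact hJ00neg
  · rw [hbJ]; exact hJ11neg
  · rw [hcJ]; exact hJ22neg
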